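/- arXiv:2203.01822 — 2 statements merged into one kernel-verified Lean document; each statement's English description precedes it below -/
import Mathlib

section
/- Let f : ℝ → ℝ be n-times differentiable, let λ₁,…,λ_k be distinct reals with multiplicities m₁,…,m_k summing to n, and let L be the Hermite interpolation polynomial of f of degree < n (so L^{(m)}(λ_j) = f^{(m)}(λ_j) for 0 ≤ m < m_j). Then for every x₀ ∈ ℝ there exists ξ in the convex hull of {x₀, λ₁,…,λ_k} such that f(x₀) − L(x₀) = (f^{(n)}(ξ)/n!) · (x₀ − λ₁)^{m₁} ⋯ (x₀ − λ_k)^{m_k}. -/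
open Polynomial


lemma genRolle : ∀ (n : ℕ) (g : ℝ → ℝ),
    (∀ i < n, Differentiable ℝ (iteratedDeriv i g)) →
    ∀ x : Fin (n + 1) → ℝ, Monotone x →
    (∀ i : Fin (n + 1), ∀ d ≤ (Finset.univ.filter
        fun j => j < i ∧ x j = x i).card, iteratedDeriv d g (x i) = 0) →
    ∃ ξ ∈ Set.Icc (x 0) (x (Fin.last n)), iteratedDeriv n g ξ = 0 := by
  intro n
  induction n with
  | zero =>
    intro g _ x _ hP
    exact ⟨x 0, ⟨le_rfl, le_rfl⟩, hP 0 0 (Nat.zero_le _)⟩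
  | succ n ih =>
    intro g hg x hmono hP
    have hgd : Differentiable ℝ g := by
      have := hg 0 (Nat.succ_pos n); rwa [iteratedDeriv_zero] at this
    have hchoice : ∀ i : Fin (n + 1), ∃ y : ℝ,
        x i.castSucc ≤ y ∧ y ≤ x i.succ ∧ deriv g y = 0 ∧
        (x i.castSucc < x i.succ → x i.castSucc < y ∧ y < x i.succ) ∧
        (x i.castSucc = x i.succ → y = x i.castSucc) := by
      intro i
      rcases lt_or_eq_of_le (hmono i.castSucc_le_succ) with hlt | heq
      · obtain ⟨cc, hcc, hc0⟩ := exists_deriv_eq_zero hlt hgd.continuous.continuousOn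
          (by
            have h1 : iteratedDeriv 0 g (x i.castSucc) = 0 := hP i.castSucc 0 (Nat.zero_le _)
            have h2 : iteratedDeriv 0 g (x i.succ) = 0 := hP i.succ 0 (Nat.zero_le _)
            rw [iteratedDeriv_zero] at h1 h2
            rw [h1, h2])
        exact ⟨cc, hcc.1.le, hcc.2.le, hc0, fun _ => hcc, fun h => absurd h hlt.ne⟩
      · refine ⟨x i.castSucc, le_rfl, heq.le, ?_, fun h => absurd heq h.ne, fun _ => rfl⟩
        have hmem : i.castSucc ∈ Finset.univ.filter
            (fun j => j < i.succ ∧ x j = x i.succ) := by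
          simp [Fin.castSucc_lt_succ, heq]
        have h1 : iteratedDeriv 1 g (x i.succ) = 0 :=
          hP i.succ 1 (Finset.card_pos.mpr ⟨_, hmem⟩)
        rw [iteratedDeriv_one] at h1
        rw [heq]; exact h1
    choose y hy1 hy2 hy3 hy4 hy5 using hchoice
    have hymono : Monotone y := by
      intro i i' hii
      rcases eq_or_lt_of_le hii with rfl | hlt
      · exact le_rfl
      · calc y i ≤ x i.succ := hy2 i
          _ ≤ x i'.castSucc := hmono (by
              simp only [Fin.le_def, Fin.val_succ, Fin.coe_castSucc]
              exact hlt)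
          _ ≤ y i' := hy1 i'
    have hPy : ∀ i : Fin (n + 1), ∀ d ≤ (Finset.univ.filter
        fun j => j < i ∧ y j = y i).card, iteratedDeriv d (deriv g) (y i) = 0 := by
      intro i d hd
      rcases lt_or_eq_of_le (hmono i.castSucc_le_succ) with hlt | heq
      · have hempty : (Finset.univ.filter fun j => j < i ∧ y j = y i) = ∅ := by
          rw [Finset.filter_eq_empty_iff]
          rintro j -
          rintro ⟨hji, hyy⟩
          have h1 : y j ≤ x i.castSucc := le_trans (hy2 j) (hmono (by
            simp only [Fin.le_def, Fin.val_succ, Fin.coe_castSucc]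
            exact hji))
          exact (lt_of_le_of_lt h1 (hy4 i hlt).1).ne hyy
        rw [hempty, Finset.card_empty, Nat.le_zero] at hd
        subst hd
        rw [iteratedDeriv_zero]
        exact hy3 i
      · have hyi : y i = x i.castSucc := hy5 i heq
        have hsub : insert i.castSucc ((Finset.univ.filter
            fun j => j < i ∧ y j = y i).image Fin.castSucc) ⊆
            Finset.univ.filter (fun j => j < i.succ ∧ x j = x i.succ) := by
          intro a ha
          rcases Finset.mem_insert.mp ha with rfl | ha
          · simp [Fin.castSucc_lt_succ, heq]
          · obtain ⟨j, hj, rfl⟩ := Finset.mem_image.mp ha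
            obtain ⟨hji, hyy⟩ := (Finset.mem_filter.mp hj).2
            have hxj : x j.succ ≤ x i.castSucc := hmono (by
              simp only [Fin.le_def, Fin.val_succ, Fin.coe_castSucc]
              exact hji)
            have hyj : y j = x i.castSucc := by rw [hyy, hyi]
            have h1 : x j.succ = x i.castSucc :=
              le_antisymm hxj (by rw [← hyj]; exact hy2 j)
            have h2 : x j.castSucc = x j.succ := by
              rcases lt_or_eq_of_le (hmono j.castSucc_le_succ) with hlt' | h
              · exact absurd (hyj.symm ▸ (hy4 j hlt').2) (by rw [h1]; exact lt_irrefl _)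
              · exact h
            refine Finset.mem_filter.mpr ⟨Finset.mem_univ _, ?_, ?_⟩
            · simp only [Fin.lt_def, Fin.val_succ, Fin.coe_castSucc] at hji ⊢
              omega
            · rw [h2, h1, heq]
        have hnotmem : i.castSucc ∉ (Finset.univ.filter
            fun j => j < i ∧ y j = y i).image Fin.castSucc := by
          simp only [Finset.mem_image, not_exists]
          rintro j ⟨hj, hjc⟩
          have hlt' := (Finset.mem_filter.mp hj).2.1
          exact absurd (Fin.castSucc_injective _ hjc) hlt'.ne
        have hcard : (Finset.univ.filter fun j => j < i ∧ y j = y i).card + 1 ≤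
            (Finset.univ.filter fun j => j < i.succ ∧ x j = x i.succ).card := by
          have h4 := Finset.card_le_card hsub
          rw [Finset.card_insert_of_notMem hnotmem,
            Finset.card_image_of_injective _ (Fin.castSucc_injective _)] at h4
          omega
        have h5 := hP i.succ (d + 1) (le_trans (Nat.add_le_add_right hd 1) hcard)
        rw [iteratedDeriv_succ'] at h5
        rw [hyi, heq]
        exact h5
    have hg' : ∀ i < n, Differentiable ℝ (iteratedDeriv i (deriv g)) := by
      intro i hi
      rw [← iteratedDeriv_succ']
      exact hg (i + 1) (Nat.succ_lt_succ hi)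
    obtain ⟨ξ, hξ1, hξ2⟩ := ih (deriv g) hg' y hymono hPy
    refine ⟨ξ, ⟨?_, ?_⟩, ?_⟩
    · refine le_trans ?_ hξ1.1
      have := hy1 0
      rwa [Fin.castSucc_zero] at this
    · refine le_trans hξ1.2 ?_
      have := hy2 (Fin.last n)
      rwa [Fin.succ_last] at this
    · rw [iteratedDeriv_succ']
      exact hξ2


lemma iterSub {n : ℕ} {f : ℝ → ℝ}
    (hf : ∀ i < n, Differentiable ℝ (iteratedDeriv i f)) (Q : ℝ[X]) :
    ∀ d ≤ n, iteratedDeriv d (fun t => f t - Q.eval t) =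
      fun t => iteratedDeriv d f t - (derivative^[d] Q).eval t := by
  intro d
  induction d with
  | zero => intro _; simp
  | succ d ihd =>
    intro hd
    rw [iteratedDeriv_succ, ihd (Nat.le_of_succ_le hd)]
    funext t
    rw [iteratedDeriv_succ]
    have h1 : DifferentiableAt ℝ (iteratedDeriv d f) t :=
      (hf d (Nat.lt_of_succ_le hd)).differentiableAt
    have h2 : DifferentiableAt ℝ (fun t => (derivative^[d] Q).eval t) t :=
      (Polynomial.differentiable _).differentiableAt
    rw [deriv_fun_sub h1 h2, Polynomial.deriv, Function.iterate_succ_apply']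

lemma evalIterDeriv {a : ℝ} {mm d : ℕ} {p : ℝ[X]}
    (hdvd : (X - C a) ^ mm ∣ p) (hd : d < mm) :
    (derivative^[d] p).eval a = 0 := by
  have h := Polynomial.pow_sub_dvd_iterate_derivative_of_pow_dvd d hdvd
  have h1 : (X - C a) ∣ derivative^[d] p :=
    dvd_trans (dvd_pow_self _ (by omega : mm - d ≠ 0)) h
  exact Polynomial.dvd_iff_isRoot.mp h1


theorem hermite_interpolation_remainder
    {k n : ℕ} (f : ℝ → ℝ)
    (hf : ∀ i < n, Differentiable ℝ (iteratedDeriv i f))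
    (lam : Fin k → ℝ) (hinj : Function.Injective lam)
    (m : Fin k → ℕ) (hm : ∀ j, 0 < m j) (hsum : ∑ j, m j = n)
    (L : Polynomial ℝ) (hdeg : L.degree < n)
    (hinterp : ∀ (j : Fin k) (d : ℕ), d < m j →
      (Polynomial.derivative^[d] L).eval (lam j) = iteratedDeriv d f (lam j))
    (x₀ : ℝ) :
    ∃ ξ ∈ convexHull ℝ (insert x₀ (Set.range lam)),
      f x₀ - L.eval x₀ =
        iteratedDeriv n f ξ / (Nat.factorial n) * ∏ j, (x₀ - lam j) ^ m j := by
  classical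
  by_cases hx : x₀ ∈ Set.range lam
  · obtain ⟨j, hj⟩ := hx
    refine ⟨x₀, subset_convexHull ℝ _ (Set.mem_insert _ _), ?_⟩
    have h0 : L.eval x₀ = f x₀ := by
      have h := hinterp j 0 (hm j)
      simp only [Function.iterate_zero, id_eq, iteratedDeriv_zero] at h
      rw [hj] at h
      exact h
    rw [h0, sub_self,
      Finset.prod_eq_zero (Finset.mem_univ j) (by rw [← hj, sub_self]; exact zero_pow (hm j).ne'),
      mul_zero]
  · set W : ℝ[X] := ∏ j, (X - C (lam j)) ^ m j with hW
    have hWe : ∀ t : ℝ, W.eval t = ∏ j, (t - lam j) ^ m j := by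
      intro t; simp [hW, eval_prod]
    have hW0 : W.eval x₀ ≠ 0 := by
      rw [hWe]
      exact Finset.prod_ne_zero_iff.mpr fun j _ =>
        pow_ne_zero _ (sub_ne_zero_of_ne fun h => hx ⟨j, h.symm⟩)
    set c : ℝ := (f x₀ - L.eval x₀) / W.eval x₀ with hc
    set Q : ℝ[X] := L + C c * W with hQ
    set g : ℝ → ℝ := fun t => f t - Q.eval t with hg
    have hgx₀ : g x₀ = 0 := by
      rw [hg]
      simp only [hQ, eval_add, eval_mul, eval_C, hc]
      rw [div_mul_cancel₀ _ hW0]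
      ring
    have hQd : ∀ d, derivative^[d] Q = derivative^[d] L + C c * derivative^[d] W := by
      intro d
      induction d with
      | zero => simp [hQ]
      | succ d ih =>
        simp only [Function.iterate_succ_apply']
        rw [ih, derivative_add, derivative_C_mul]
    have hWdvd : ∀ j : Fin k, (X - C (lam j)) ^ m j ∣ W := fun j =>
      Finset.dvd_prod_of_mem _ (Finset.mem_univ j)
    have hmn : ∀ j : Fin k, m j ≤ n := by
      intro j
      rw [← hsum]
      exact Finset.single_le_sum (fun _ _ => Nat.zero_le _) (Finset.mem_univ j)
    have hgzero : ∀ (j : Fin k) (d : ℕ), d < m j → iteratedDeriv d g (lam j) = 0 := by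
      intro j d hd
      have hdn : d ≤ n := le_trans hd.le (hmn j)
      rw [hg, iterSub hf Q d hdn]
      simp only
      rw [hQd d, eval_add, eval_mul, eval_C, hinterp j d hd, evalIterDeriv (hWdvd j) hd]
      ring
    have hgdiff : ∀ i < n, Differentiable ℝ (iteratedDeriv i g) := by
      intro i hi
      rw [hg, iterSub hf Q i hi.le]
      exact (hf i hi).sub (Polynomial.differentiable _)
    -- build the tuple of zeros
    have hcard : Fintype.card ((j : Fin k) × Fin (m j)) = n := by
      simp [Fintype.card_sigma, hsum]
    let e : ((j : Fin k) × Fin (m j)) ≃ Fin n := (Fintype.equivFin _).trans (finCongr hcard)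
    set v : Fin n → ℝ := fun i => lam (e.symm i).1 with hv
    set u : Fin (n + 1) → ℝ := Fin.cons x₀ v with hu
    have humem : ∀ j, u j ∈ insert x₀ (Set.range lam) := by
      intro j
      refine Fin.cases ?_ ?_ j
      · simp [hu]
      · intro i
        simp only [hu, Fin.cons_succ, hv]
        exact Set.mem_insert_iff.mpr (Or.inr ⟨_, rfl⟩)
    have hcount : ∀ w : ℝ, (Finset.univ.filter fun j : Fin (n + 1) => u j = w).card
        = (if x₀ = w then 1 else 0)
          + (Finset.univ.filter fun i : Fin n => v i = w).card := by
      intro w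
      rw [Finset.card_filter, Finset.card_filter, Fin.sum_univ_succ]
      simp [hu]
    have hcv : ∀ j₀ : Fin k,
        (Finset.univ.filter fun i : Fin n => v i = lam j₀).card = m j₀ := by
      intro j₀
      have h1 : ∀ i : Fin n, v i = lam j₀ ↔ (e.symm i).1 = j₀ :=
        fun i => ⟨fun h => hinj h, fun h => by rw [hv]; simp only; rw [h]⟩
      simp only [h1]
      have h2 : (Finset.univ.filter fun i : Fin n => (e.symm i).1 = j₀).card
          = (Finset.univ.filter fun p : (j : Fin k) × Fin (m j) => p.1 = j₀).card := by
        refine Finset.card_bij' (fun i _ => e.symm i) (fun p _ => e p) ?_ ?_ ?_ ?_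
        · intro i hi
          simpa using (Finset.mem_filter.mp hi).2
        · intro p hp
          have := (Finset.mem_filter.mp hp).2
          simp [this]
        · intro i _; simp
        · intro p _; simp
      rw [h2]
      have h3 : (Finset.univ.filter fun p : (j : Fin k) × Fin (m j) => p.1 = j₀)
          = ({j₀} : Finset (Fin k)).sigma (fun j => Finset.univ) := by
        ext ⟨a, b⟩
        simp [Finset.mem_sigma]
      rw [h3, Finset.card_sigma]
      simp
    have hcx : (Finset.univ.filter fun j : Fin (n + 1) => u j = x₀).card = 1 := by
      rw [hcount x₀]
      have h4 : (Finset.univ.filter fun i : Fin n => v i = x₀) = ∅ := by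
        rw [Finset.filter_eq_empty_iff]
        intro i _
        exact fun h => hx ⟨(e.symm i).1, h⟩
      simp [h4]
    set σ := Tuple.sort u with hσ
    set xs : Fin (n + 1) → ℝ := u ∘ σ with hxs
    have hmono : Monotone xs := Tuple.monotone_sort u
    have hpc : ∀ i : Fin (n + 1),
        (Finset.univ.filter fun j => j < i ∧ xs j = xs i).card
          < (Finset.univ.filter fun j : Fin (n + 1) => u j = xs i).card := by
      intro i
      have hsub : (Finset.univ.filter fun j => j < i ∧ xs j = xs i)
          ⊆ (Finset.univ.filter fun j => xs j = xs i).erase i := by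
        intro j hj
        obtain ⟨-, hji, hxx⟩ := Finset.mem_filter.mp hj
        exact Finset.mem_erase.mpr ⟨hji.ne, Finset.mem_filter.mpr ⟨Finset.mem_univ _, hxx⟩⟩
      have h1 := Finset.card_le_card hsub
      have h2 : ((Finset.univ.filter fun j => xs j = xs i).erase i).card
          < (Finset.univ.filter fun j => xs j = xs i).card :=
        Finset.card_erase_lt_of_mem (Finset.mem_filter.mpr ⟨Finset.mem_univ _, rfl⟩)
      have h3 : (Finset.univ.filter fun j => xs j = xs i).card
          = (Finset.univ.filter fun j : Fin (n + 1) => u j = xs i).card := by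
        refine Finset.card_bij' (fun j _ => σ j) (fun j _ => σ.symm j) ?_ ?_ ?_ ?_
        · intro j hj
          have := (Finset.mem_filter.mp hj).2
          exact Finset.mem_filter.mpr ⟨Finset.mem_univ _, this⟩
        · intro j hj
          have h5 := (Finset.mem_filter.mp hj).2
          refine Finset.mem_filter.mpr ⟨Finset.mem_univ _, ?_⟩
          have h6 : xs (σ.symm j) = u j := by
            simp only [hxs, Function.comp_apply, Equiv.apply_symm_apply]
          rw [h6]; exact h5
        · intro j _; simp
        · intro j _; simp
      omega
    have hP : ∀ i : Fin (n + 1),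
        ∀ d ≤ (Finset.univ.filter fun j => j < i ∧ xs j = xs i).card,
        iteratedDeriv d g (xs i) = 0 := by
      intro i d hd
      have hdlt := lt_of_le_of_lt hd (hpc i)
      rcases Fin.eq_zero_or_eq_succ (σ i) with h0 | ⟨i', hi'⟩
      · have hxi : xs i = x₀ := by
          rw [hxs]; simp only [Function.comp_apply, h0, hu, Fin.cons_zero]
        rw [hxi] at hdlt ⊢
        rw [hcx] at hdlt
        interval_cases d
        rw [iteratedDeriv_zero]
        exact hgx₀
      · have hxi : xs i = lam (e.symm i').1 := by
          rw [hxs]; simp only [Function.comp_apply, hi', hu, Fin.cons_succ, hv]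
        rw [hxi] at hdlt ⊢
        rw [hcount, hcv] at hdlt
        have hne : x₀ ≠ lam (e.symm i').1 := fun h => hx ⟨_, h.symm⟩
        rw [if_neg hne] at hdlt
        exact hgzero _ d (by omega)
    obtain ⟨ξ, hmem, hξ⟩ := genRolle n g hgdiff xs hmono hP
    have hhull : Set.Icc (xs 0) (xs (Fin.last n)) ⊆
        convexHull ℝ (insert x₀ (Set.range lam)) :=
      (convex_convexHull ℝ _).ordConnected.out
        (subset_convexHull ℝ _ (humem (σ 0)))
        (subset_convexHull ℝ _ (humem (σ (Fin.last n))))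
    refine ⟨ξ, hhull hmem, ?_⟩
    have hLn : derivative^[n] L = 0 := by
      rcases eq_or_ne L 0 with rfl | hL0
      · simp
      · exact iterate_derivative_eq_zero ((natDegree_lt_iff_degree_lt hL0).mpr hdeg)
    have hWmonic : W.Monic := monic_prod_of_monic _ _ fun j _ => (monic_X_sub_C _).pow _
    have hWdeg : W.natDegree = n := by
      rw [hW, natDegree_prod _ _ (fun j _ => pow_ne_zero _ (X_sub_C_ne_zero _))]
      simp [natDegree_pow, natDegree_X_sub_C, hsum]
    have hWn : derivative^[n] W = C ((Nat.factorial n : ℕ) : ℝ) := by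
      have hle : (derivative^[n] W).natDegree ≤ 0 :=
        le_trans (natDegree_iterate_derivative _ _) (by rw [hWdeg]; omega)
      rw [eq_C_of_natDegree_le_zero hle, coeff_iterate_derivative, zero_add,
        Nat.descFactorial_self]
      have hco : W.coeff n = 1 := by
        rw [← hWdeg]; exact hWmonic.coeff_natDegree
      rw [hco]
      simp
    have hiter := congrFun (iterSub hf Q n le_rfl) ξ
    rw [hg] at hξ
    rw [hiter] at hξ
    rw [hQd n, hLn, eval_add, eval_mul, eval_C, eval_zero, zero_add, hWn, eval_C] at hξ
    have hfac : ((Nat.factorial n : ℕ) : ℝ) ≠ 0 := Nat.cast_ne_zero.mpr (Nat.factorial_ne_zero n)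
    have hc2 : c = iteratedDeriv n f ξ / ((Nat.factorial n : ℕ) : ℝ) := by
      rw [eq_div_iff hfac]
      linarith
    have hfl : f x₀ - L.eval x₀ = c * W.eval x₀ := by
      rw [hc, div_mul_cancel₀ _ hW0]
    rw [hfl, hc2, hWe]
end

section
/- Let A be a linear operator on a finite-dimensional complex vector space V annihilated by T(x) = ∏_{i=1}^k (x−λ_i)^{m_i} with λ_i distinct, and let F be an entire function. Then F(A) = Σ_{i=1}^k P_i(A) · L_i(A), where P_i(x) = Σ_{p=0}^{m_i−1} F^{(p)}(λ_i)(x−λ_i)^p/p! is the Taylor polynomial of F of degree m_i − 1 at λ_i, and L_i(A) is the principal Lagrange resolvent of A corresponding to λ_i. -/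
open Polynomial


lemma aux_taylor_hasSum (F : ℂ → ℂ) (a : ℕ → ℂ)
    (hFa : ∀ x : ℂ, HasSum (fun i : ℕ => a i * x ^ i) (F x)) (t : ℂ) (p : ℕ) :
    HasSum (fun n : ℕ => (n.choose p : ℂ) * a n * t ^ (n - p))
      ((p.factorial : ℂ)⁻¹ * iteratedDeriv p F t) := by
  set q : FormalMultilinearSeries ℂ ℂ ℂ := FormalMultilinearSeries.ofScalars ℂ a with hq
  have hrad : q.radius = ⊤ := by
    apply ENNReal.eq_top_of_forall_nnreal_le
    intro r
    have hs : Summable fun n : ℕ => a n * ((r : ℝ) : ℂ) ^ n := (hFa _).summable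
    have h0 : Filter.Tendsto (fun n : ℕ => ‖a n * ((r : ℝ) : ℂ) ^ n‖)
        Filter.atTop (nhds 0) := by
      simpa using hs.tendsto_atTop_zero.norm
    obtain ⟨C, hC⟩ := h0.bddAbove_range
    apply q.le_radius_of_bound C
    intro n
    have he : ‖q n‖ * (r : ℝ) ^ n = ‖a n * ((r : ℝ) : ℂ) ^ n‖ := by
      rw [hq, FormalMultilinearSeries.ofScalars_norm, norm_mul, norm_pow]
      simp [abs_of_nonneg r.2]
    rw [he]
    exact hC ⟨n, rfl⟩
  have hF : HasFPowerSeriesOnBall F q 0 ⊤ := by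
    refine ⟨le_of_eq hrad.symm, ENNReal.zero_lt_top, fun {y} _ => ?_⟩
    rw [zero_add]
    simp only [hq, FormalMultilinearSeries.ofScalars_apply_eq, smul_eq_mul]
    exact hFa y
  have hFl : HasFPowerSeriesOnBall F (q.changeOrigin t) t ⊤ := by
    have h := hF.changeOrigin (y := t) (by simp)
    simpa using h
  have hval : (q.changeOrigin t) p (fun _ => (1 : ℂ))
      = (p.factorial : ℂ)⁻¹ * iteratedDeriv p F t := by
    have h1 := hFl.factorial_smul (1 : ℂ) p
    rw [iteratedDeriv_eq_iteratedFDeriv, ← h1, nsmul_eq_mul, ← mul_assoc,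
      inv_mul_cancel₀ (Nat.cast_ne_zero.mpr p.factorial_ne_zero), one_mul]
  have hcsrad : (q.changeOriginSeries p).radius = ⊤ :=
    top_le_iff.mp (hrad ▸ q.le_changeOriginSeries_radius p)
  have hcs : HasSum (fun l => (q.changeOriginSeries p l) fun _ => t)
      ((q.changeOrigin t) p) := by
    apply (q.changeOriginSeries p).hasSum
    rw [hcsrad]
    exact edist_lt_top t 0
  have hcs1 := (ContinuousMultilinearMap.apply ℂ (fun _ : Fin p => ℂ) ℂ
    (fun _ => (1 : ℂ))).hasSum hcs
  have hterm : ∀ l : ℕ, ((q.changeOriginSeries p l) fun _ => t) (fun _ => (1 : ℂ))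
      = ((p + l).choose l : ℂ) * a (p + l) * t ^ l := by
    intro l
    rw [FormalMultilinearSeries.changeOriginSeries]
    rw [ContinuousMultilinearMap.sum_apply, ContinuousMultilinearMap.sum_apply]
    have hterm2 : ∀ s : { s : Finset (Fin (p + l)) // s.card = l },
        (q.changeOriginSeriesTerm p l s.1 s.2 (fun _ => t)) (fun _ => (1 : ℂ))
          = a (p + l) * t ^ l := by
      rintro ⟨s, hs⟩
      rw [q.changeOriginSeriesTerm_apply]
      rw [hq]
      show a (p + l) • (ContinuousMultilinearMap.mkPiAlgebraFin ℂ (p + l) ℂ) _ = _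
      rw [ContinuousMultilinearMap.mkPiAlgebraFin_apply, List.prod_ofFn, smul_eq_mul]
      congr 1
      show ∏ i : Fin (p + l), s.piecewise (fun _ => t) (fun _ => (1 : ℂ)) i = t ^ l
      rw [Finset.prod_piecewise]
      simp [hs]
    rw [Finset.sum_congr rfl fun s _ => hterm2 s, Finset.sum_const, Finset.card_univ,
      nsmul_eq_mul, mul_assoc]
    congr 2
    rw [Fintype.card_subtype, ← Finset.powerset_univ, ← Finset.powersetCard_eq_filter,
      Finset.card_powersetCard, Finset.card_univ, Fintype.card_fin]
  have h2 : HasSum (fun l : ℕ => ((p + l).choose l : ℂ) * a (p + l) * t ^ l)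
      ((q.changeOrigin t) p fun _ => (1 : ℂ)) := by
    simpa only [ContinuousMultilinearMap.apply_apply, hterm] using hcs1
  rw [← hval]
  have h3 : ∀ l : ℕ, (((l + p).choose p : ℂ) * a (l + p) * t ^ (l + p - p))
      = ((p + l).choose l : ℂ) * a (p + l) * t ^ l := by
    intro l
    rw [Nat.add_sub_cancel, add_comm l p, Nat.choose_symm_add]
  have h4 := (hasSum_nat_add_iff
    (f := fun n : ℕ => (n.choose p : ℂ) * a n * t ^ (n - p)) p).mp
    (by simpa only [h3] using h2)
  have h5 : ∑ i ∈ Finset.range p, ((i.choose p : ℂ) * a i * t ^ (i - p)) = 0 :=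
    Finset.sum_eq_zero fun i hi => by
      simp [Nat.choose_eq_zero_of_lt (Finset.mem_range.mp hi)]
  rw [h5, add_zero] at h4
  exact h4


lemma aux_dvd_of_derivs (q : ℂ[X]) (t : ℂ) (M : ℕ)
    (h : ∀ d < M, (Polynomial.derivative^[d] q).eval t = 0) :
    (X - C t) ^ M ∣ q := by
  rcases eq_or_ne q 0 with rfl | hq
  · exact dvd_zero _
  rcases Nat.eq_zero_or_pos M with rfl | hM
  · simpa using one_dvd q
  have hlt : M - 1 < q.rootMultiplicity t := by
    apply Polynomial.lt_rootMultiplicity_of_isRoot_iterate_derivative_of_mem_nonZeroDivisors hq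
    · intro d hd
      exact h d (by omega)
    · exact mem_nonZeroDivisors_of_ne_zero
        (Nat.cast_ne_zero.mpr (Nat.factorial_ne_zero _))
  exact (pow_dvd_pow _ (by omega)).trans (q.pow_rootMultiplicity_dvd t)

theorem entire_function_of_operator_via_resolvents
    {V : Type*} [NormedAddCommGroup V] [NormedSpace ℂ V] [FiniteDimensional ℂ V]
    {k n : ℕ} (A : Module.End ℂ V)
    (lam : Fin k → ℂ) (hinj : Function.Injective lam)
    (m : Fin k → ℕ) (hm : ∀ j, 0 < m j) (hsum : ∑ j, m j = n)
    (hTA : Polynomial.aeval A (∏ j, (Polynomial.X - Polynomial.C (lam j)) ^ m j) = 0)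
    (That : Fin k → Polynomial ℂ)
    (hdeg : ∀ i, (That i).degree < n)
    (hinterp : ∀ (i j : Fin k) (d : ℕ), d < m j →
      (Polynomial.derivative^[d] (That i)).eval (lam j) =
        if j = i ∧ d = 0 then 1 else 0)
    (F : ℂ → ℂ) (a : ℕ → ℂ)
    (hFa : ∀ x : ℂ, HasSum (fun i : ℕ => a i * x ^ i) (F x))
    (FA : Module.End ℂ V)
    (hFA : ∀ v : V, HasSum (fun i : ℕ => a i • (A ^ i) v) (FA v))
    (P : Fin k → Polynomial ℂ)
    (hP : ∀ i, P i = ∑ p ∈ Finset.range (m i),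
      Polynomial.C (iteratedDeriv p F (lam i) / (Nat.factorial p)) *
        (Polynomial.X - Polynomial.C (lam i)) ^ p) :
    FA = ∑ i, Polynomial.aeval A (P i) * Polynomial.aeval A (That i) := by
  rcases Nat.eq_zero_or_pos k with hk | hk
  · subst hk
    have h1 : (1 : Module.End ℂ V) = 0 := by simpa using hTA
    haveI : Subsingleton (Module.End ℂ V) := subsingleton_of_zero_eq_one h1.symm
    exact Subsingleton.elim _ _
  have hn : 0 < n :=
    hsum ▸ Finset.sum_pos (fun j _ => hm j) ⟨⟨0, hk⟩, Finset.mem_univ _⟩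
  set T : ℂ[X] := ∏ j, (X - C (lam j)) ^ m j with hT
  have hco : Pairwise (Function.onFun IsCoprime fun j : Fin k => (X - C (lam j)) ^ m j) :=
    fun i j hij => ((Polynomial.pairwise_coprime_X_sub_C hinj hij).pow)
  have hTne : T ≠ 0 := by
    rw [hT]
    exact Finset.prod_ne_zero_iff.mpr fun j _ =>
      pow_ne_zero _ (X_sub_C_ne_zero _)
  have hTnat : T.natDegree = n := by
    rw [hT, Polynomial.natDegree_prod _ _ fun j _ => pow_ne_zero _ (X_sub_C_ne_zero _)]
    simp [Polynomial.natDegree_pow, hsum]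
  have hTdeg : T.degree = (n : WithBot ℕ) := by
    rw [Polynomial.degree_eq_natDegree hTne, hTnat]
  -- Step A: sum of resolvents is 1
  have honePoly : (∑ j, That j) = 1 := by
    have hdvd : T ∣ (∑ j, That j) - 1 := by
      rw [hT]
      apply Fintype.prod_dvd_of_coprime hco
      intro j
      apply aux_dvd_of_derivs
      intro d hd
      rw [Polynomial.iterate_derivative_sub, Polynomial.eval_sub,
        Polynomial.iterate_derivative_sum, Polynomial.eval_finset_sum]
      rw [Finset.sum_congr rfl fun i _ => hinterp i j d hd]
      rcases Nat.eq_zero_or_pos d with rfl | hd0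
      · simp
      · rw [Polynomial.iterate_derivative_one hd0]
        simp [Nat.pos_iff_ne_zero.mp hd0]
    have hdlt : ((∑ j, That j) - 1).degree < T.degree := by
      rw [hTdeg]
      apply lt_of_le_of_lt (Polynomial.degree_sub_le _ _)
      apply max_lt
      · apply lt_of_le_of_lt (Polynomial.degree_sum_le _ _)
        rw [Finset.sup_lt_iff (by exact_mod_cast WithBot.bot_lt_coe n)]
        exact fun j _ => hdeg j
      · rw [Polynomial.degree_one]
        exact_mod_cast hn
    have h0 := Polynomial.eq_zero_of_dvd_of_degree_lt hdvd hdlt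
    have := sub_eq_zero.mp h0
    exact this
  have hone : (∑ j, (aeval A (That j) : Module.End ℂ V)) = 1 := by
    rw [← map_sum (aeval A) That Finset.univ, honePoly, map_one]
  -- Step B: (X - lam i)^(m i) * That i is annihilated
  have hnil : ∀ i : Fin k,
      (aeval A ((X - C (lam i)) ^ m i * That i) : Module.End ℂ V) = 0 := by
    intro i
    have hdvd : T ∣ (X - C (lam i)) ^ m i * That i := by
      rw [hT]
      apply Fintype.prod_dvd_of_coprime hco
      intro j
      by_cases hji : j = i
      · subst hji; exact dvd_mul_right _ _
      · refine Dvd.dvd.mul_left ?_ _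
        apply aux_dvd_of_derivs
        intro d hd
        rw [hinterp i j d hd]
        simp [hji]
    obtain ⟨c, hc⟩ := hdvd
    rw [hc, map_mul, hTA, zero_mul]
  -- Step C: on generalized eigenvectors, FA acts as the Taylor polynomial
  have hkey : ∀ (i : Fin k) (w : V),
      ((aeval A ((X - C (lam i)) ^ m i) : Module.End ℂ V) w = 0) →
      FA w = aeval A (P i) w := by
    intro i w hw
    set N : Module.End ℂ V := aeval A (X - C (lam i)) with hN
    have hNw : (N ^ m i) w = 0 := by
      rw [hN, ← map_pow]; exact hw
    have hNp : ∀ p : ℕ, m i ≤ p → (N ^ p) w = 0 := by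
      intro p hp
      rw [← Nat.sub_add_cancel hp, pow_add, Module.End.mul_apply, hNw, map_zero]
    have hbin : ∀ nn : ℕ, (A ^ nn) w
        = ∑ p ∈ Finset.range (m i),
            ((nn.choose p : ℂ) * lam i ^ (nn - p)) • (N ^ p) w := by
      intro nn
      have hpoly : (X : ℂ[X]) ^ nn = ∑ p ∈ Finset.range (nn + 1),
          C ((nn.choose p : ℂ) * lam i ^ (nn - p)) * (X - C (lam i)) ^ p := by
        conv_lhs => rw [← sub_add_cancel (X : ℂ[X]) (C (lam i)), add_pow]
        refine Finset.sum_congr rfl fun p hp => ?_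
        rw [C_mul, C_pow, Polynomial.C_eq_natCast]
        ring
      have h2 : (A ^ nn) w = ∑ p ∈ Finset.range (nn + 1),
          ((nn.choose p : ℂ) * lam i ^ (nn - p)) • (N ^ p) w := by
        have h3 : A ^ nn = aeval A ((X : ℂ[X]) ^ nn) := by rw [map_pow, aeval_X]
        rw [h3, hpoly, map_sum, LinearMap.sum_apply]
        refine Finset.sum_congr rfl fun p _ => ?_
        rw [map_mul, aeval_C, map_pow, ← hN, Module.End.mul_apply,
          Module.algebraMap_end_apply]
      rw [h2]
      -- change range (nn+1) to range (m i) via common superset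
      rw [show (∑ p ∈ Finset.range (nn + 1),
            ((nn.choose p : ℂ) * lam i ^ (nn - p)) • (N ^ p) w)
          = ∑ p ∈ Finset.range (nn + m i + 1),
            ((nn.choose p : ℂ) * lam i ^ (nn - p)) • (N ^ p) w from
        Finset.sum_subset (Finset.range_subset_range.mpr (by omega)) fun p hp1 hp => by
          rw [Nat.choose_eq_zero_of_lt (by simp at hp; omega)]
          simp]
      refine (Finset.sum_subset (Finset.range_subset_range.mpr (by omega))
        fun p _ hp => ?_).symm
      rw [hNp p (by simp at hp; omega), smul_zero]
    have hhs : HasSum (fun nn : ℕ => a nn • (A ^ nn) w)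
        (∑ p ∈ Finset.range (m i),
          ((p.factorial : ℂ)⁻¹ * iteratedDeriv p F (lam i)) • (N ^ p) w) := by
      have h1 : ∀ p ∈ Finset.range (m i), HasSum
          (fun nn : ℕ => ((nn.choose p : ℂ) * a nn * lam i ^ (nn - p)) • (N ^ p) w)
          (((p.factorial : ℂ)⁻¹ * iteratedDeriv p F (lam i)) • (N ^ p) w) :=
        fun p _ => (aux_taylor_hasSum F a hFa (lam i) p).smul_const _
      have h2 := hasSum_sum h1
      have hfun : (fun nn : ℕ => ∑ p ∈ Finset.range (m i),
          ((nn.choose p : ℂ) * a nn * lam i ^ (nn - p)) • (N ^ p) w)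
          = fun nn : ℕ => a nn • (A ^ nn) w := by
        funext nn
        rw [hbin nn, Finset.smul_sum]
        refine Finset.sum_congr rfl fun p _ => ?_
        rw [smul_smul]
        congr 1
        ring
      rwa [hfun] at h2
    have hFAw : FA w = ∑ p ∈ Finset.range (m i),
        ((p.factorial : ℂ)⁻¹ * iteratedDeriv p F (lam i)) • (N ^ p) w :=
      (hFA w).unique hhs
    have hPw : (aeval A (P i)) w = ∑ p ∈ Finset.range (m i),
        ((p.factorial : ℂ)⁻¹ * iteratedDeriv p F (lam i)) • (N ^ p) w := by
      rw [hP i, map_sum, LinearMap.sum_apply]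
      refine Finset.sum_congr rfl fun p _ => ?_
      rw [map_mul, aeval_C, map_pow, ← hN, Module.End.mul_apply,
        Module.algebraMap_end_apply, div_eq_inv_mul]
    rw [hFAw, hPw]
  -- Final assembly
  ext v
  have hv : v = ∑ j, (aeval A (That j)) v := by
    rw [← LinearMap.sum_apply, hone, Module.End.one_apply]
  calc FA v = FA (∑ j, (aeval A (That j)) v) := by rw [← hv]
  _ = ∑ j, FA ((aeval A (That j)) v) := map_sum FA _ _
  _ = ∑ j, (aeval A (P j)) ((aeval A (That j)) v) := by
      refine Finset.sum_congr rfl fun j _ => ?_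
      apply hkey j
      rw [← Module.End.mul_apply, ← map_mul, hnil j]
      rfl
  _ = (∑ j, aeval A (P j) * aeval A (That j)) v := by
      rw [LinearMap.sum_apply]
      exact Finset.sum_congr rfl fun j _ => rfl
end
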